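/- Let X_1, …, X_n be nonnegative independent real random variables, where X_j takes values in the interval [α_j, β_j] with α_j > 0 for each j, and let c = max_j β_j/α_j. Let ε and δ be constants with 0 < ε < 1 and 0 < δ < 1/(2e²). Then the index set {1, …, n} can be partitioned into three sets R, S, T such that: (1) |R| ≤ (16 c²/ε³)·ln(2/δ); (2) the sum ∑_{j∈S} X_j is (ε, δ)-concentrated; (3) ∑_{j∈T} E[X_j] ≤ ε · ∑_{j=1}^n E[X_j]. -/

import Mathlib

open MeasureTheory ProbabilityTheory Finset

lemma exp_le_quad {x : ℝ} (hx : x ≤ 1/2) : Real.exp x ≤ 1 + x + 2*x^2 := by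
  have h0 : (0:ℝ) < 1 - x := by linarith
  have h1 : 1 - x ≤ Real.exp (-x) := by linarith [Real.add_one_le_exp (-x)]
  have h2 : Real.exp x * Real.exp (-x) = 1 := by rw [← Real.exp_add]; simp
  nlinarith [Real.exp_pos x, Real.exp_pos (-x), sq_nonneg x,
    mul_le_mul_of_nonneg_left h1 (Real.exp_pos x).le, mul_nonneg (sq_nonneg x) h0.le]

lemma exists_top_subset {n : ℕ} (f : Fin n → ℝ) (t : ℕ) (ht : t ≤ n) :
    ∃ R : Finset (Fin n), R.card = t ∧ ∀ i ∈ R, ∀ j ∉ R, f j ≤ f i := by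
  induction t with
  | zero => exact ⟨∅, rfl, by simp⟩
  | succ t ih =>
    obtain ⟨R, hcard, hR⟩ := ih (Nat.le_of_succ_le ht)
    have hne : (Rᶜ : Finset (Fin n)).Nonempty := by
      rw [← Finset.card_pos, Finset.card_compl, hcard, Fintype.card_fin]
      omega
    obtain ⟨j₀, hj₀, hmax⟩ := Finset.exists_max_image _ f hne
    have hj₀R : j₀ ∉ R := Finset.mem_compl.mp hj₀
    refine ⟨insert j₀ R, by rw [Finset.card_insert_of_notMem hj₀R, hcard], ?_⟩
    intro i hi j hj
    rcases Finset.mem_insert.mp hi with rfl | hiR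
    · exact hmax j (Finset.mem_compl.mpr fun h => hj (Finset.mem_insert_of_mem h))
    · exact hR i hiR j fun h => hj (Finset.mem_insert_of_mem h)

lemma mgf_le_of_Icc {Ω : Type*} [MeasurableSpace Ω] {μ : Measure Ω} [IsProbabilityMeasure μ]
    {Y : Ω → ℝ} {a b r : ℝ} (hY : Measurable Y) (hab : ∀ ω, Y ω ∈ Set.Icc a b)
    (hr : |r| * (b - a) ≤ 1/2) :
    mgf Y μ r ≤ Real.exp (r * (∫ ω, Y ω ∂μ) + 2 * r^2 * (b-a)^2) := by
  have hYint : Integrable Y μ := by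
    refine Integrable.mono' (integrable_const (max |a| |b|)) hY.aestronglyMeasurable ?_
    filter_upwards with ω
    rw [Real.norm_eq_abs]
    exact abs_le_max_abs_abs (hab ω).1 (hab ω).2
  set m := ∫ ω, Y ω ∂μ with hm_def
  have hma : a ≤ m := by
    have := integral_mono (integrable_const a) hYint (fun ω => (hab ω).1)
    simpa using this
  have hmb : m ≤ b := by
    have := integral_mono hYint (integrable_const b) (fun ω => (hab ω).2)
    simpa using this
  have habs : ∀ ω, |r * (Y ω - m)| ≤ |r| * (b - a) := by
    intro ω
    rw [abs_mul]
    refine mul_le_mul_of_nonneg_left ?_ (abs_nonneg r)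
    rw [abs_le]
    constructor <;> [linarith [(hab ω).1]; linarith [(hab ω).2]]
  have hpt : ∀ ω, Real.exp (r * Y ω) ≤
      Real.exp (r * m) * (1 + r * (Y ω - m) + 2 * (r * (Y ω - m))^2) := by
    intro ω
    have h1 : Real.exp (r * Y ω) = Real.exp (r * m) * Real.exp (r * (Y ω - m)) := by
      rw [← Real.exp_add]; ring_nf
    rw [h1]
    refine mul_le_mul_of_nonneg_left ?_ (Real.exp_pos _).le
    exact exp_le_quad (le_trans (le_abs_self _) (le_trans (habs ω) hr))
  have meas2 : Measurable fun ω => (r * (Y ω - m))^2 :=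
    ((hY.sub measurable_const).const_mul r).pow_const 2
  have I1 : Integrable (fun ω => r * (Y ω - m)) μ :=
    (hYint.sub (integrable_const m)).const_mul r
  have I2 : Integrable (fun ω => (r * (Y ω - m))^2) μ := by
    refine Integrable.mono' (integrable_const ((|r| * (b-a))^2)) meas2.aestronglyMeasurable ?_
    filter_upwards with ω
    rw [Real.norm_eq_abs, abs_pow]
    exact pow_le_pow_left₀ (abs_nonneg _) (habs ω) 2
  have hmgf : mgf Y μ r ≤
      ∫ ω, Real.exp (r * m) * (1 + r * (Y ω - m) + 2 * (r * (Y ω - m))^2) ∂μ := by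
    refine integral_mono ?_ ?_ hpt
    · refine Integrable.mono' (integrable_const (Real.exp (|r| * max |a| |b|)))
        ((hY.const_mul r).exp.aestronglyMeasurable) ?_
      filter_upwards with ω
      rw [Real.norm_eq_abs, Real.abs_exp, Real.exp_le_exp]
      calc r * Y ω ≤ |r * Y ω| := le_abs_self _
        _ = |r| * |Y ω| := abs_mul _ _
        _ ≤ |r| * max |a| |b| := by
            refine mul_le_mul_of_nonneg_left ?_ (abs_nonneg r)
            exact abs_le_max_abs_abs (hab ω).1 (hab ω).2
    · exact (((integrable_const 1).add I1).add (I2.const_mul 2)).const_mul _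
  have hint2 : ∫ ω, Real.exp (r * m) * (1 + r * (Y ω - m) + 2 * (r * (Y ω - m))^2) ∂μ =
      Real.exp (r * m) * (1 + 2 * r^2 * ∫ ω, (Y ω - m)^2 ∂μ) := by
    rw [integral_const_mul]
    congr 1
    have e1 := integral_add (μ := μ) ((integrable_const (1:ℝ)).add I1) (I2.const_mul 2)
    simp only [Pi.add_apply] at e1
    rw [e1, integral_add (integrable_const 1) I1, integral_const_mul, integral_const_mul,
      integral_sub hYint (integrable_const m)]
    simp only [integral_const, measure_univ, ENNReal.toReal_one, one_smul, smul_eq_mul, probReal_univ, ← hm_def]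
    have : ∀ ω, (r * (Y ω - m))^2 = r^2 * (Y ω - m)^2 := fun ω => by ring
    rw [integral_congr_ae (ae_of_all _ this), integral_const_mul]
    ring
  have Isq : Integrable (fun ω => (Y ω - m)^2) μ := by
    refine Integrable.mono' (integrable_const ((b-a)^2))
      ((hY.sub measurable_const).pow_const 2).aestronglyMeasurable ?_
    filter_upwards with ω
    rw [Real.norm_eq_abs, abs_pow, sq_abs]
    have h1 := (hab ω).1; have h2 := (hab ω).2
    nlinarith [mul_nonneg (by linarith : (0:ℝ) ≤ b - a - (Y ω - m))
      (by linarith : (0:ℝ) ≤ b - a + (Y ω - m))]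
  have hvar : ∫ ω, (Y ω - m)^2 ∂μ ≤ (b - a)^2 := by
    have := integral_mono (f := fun ω => (Y ω - m)^2) (g := fun _ => (b-a)^2)
      Isq (integrable_const _) ?_
    · simpa using this
    · intro ω
      show (Y ω - m)^2 ≤ (b - a)^2
      have h1 := (hab ω).1; have h2 := (hab ω).2
      nlinarith [mul_nonneg (by linarith : (0:ℝ) ≤ b - a - (Y ω - m))
        (by linarith : (0:ℝ) ≤ b - a + (Y ω - m))]
  calc mgf Y μ r ≤ Real.exp (r * m) * (1 + 2 * r^2 * ∫ ω, (Y ω - m)^2 ∂μ) := by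
        rw [← hint2]; exact hmgf
    _ ≤ Real.exp (r * m) * (1 + 2 * r^2 * (b-a)^2) := by
        have h2 : (0:ℝ) ≤ 2 * r^2 := by positivity
        gcongr
    _ ≤ Real.exp (r * m) * Real.exp (2 * r^2 * (b-a)^2) := by
        gcongr
        linarith [Real.add_one_le_exp (2 * r^2 * (b-a)^2)]
    _ = Real.exp (r * m + 2 * r^2 * (b-a)^2) := (Real.exp_add _ _).symm

lemma conc_empty {Ω : Type*} [MeasurableSpace Ω] (μ : Measure Ω) [IsProbabilityMeasure μ]
    {n : ℕ} (X : Fin n → Ω → ℝ) (ε δ : ℝ) (hδ : 0 ≤ δ) :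
    ENNReal.ofReal (1 - δ) ≤
      μ {ω | (1 - ε) * (∫ ω', (∑ j ∈ (∅ : Finset (Fin n)), X j ω') ∂μ) ≤
              ∑ j ∈ (∅ : Finset (Fin n)), X j ω ∧
             (∑ j ∈ (∅ : Finset (Fin n)), X j ω) ≤
              (1 + ε) * (∫ ω', (∑ j ∈ (∅ : Finset (Fin n)), X j ω') ∂μ)} := by
  have h : {ω : Ω | (1 - ε) * (∫ ω', (∑ j ∈ (∅ : Finset (Fin n)), X j ω') ∂μ) ≤
              ∑ j ∈ (∅ : Finset (Fin n)), X j ω ∧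
             (∑ j ∈ (∅ : Finset (Fin n)), X j ω) ≤
              (1 + ε) * (∫ ω', (∑ j ∈ (∅ : Finset (Fin n)), X j ω') ∂μ)} = Set.univ := by
    ext ω; simp
  rw [h, measure_univ]
  exact ENNReal.ofReal_le_one.mpr (by linarith)

set_option maxHeartbeats 2000000 in
theorem partitioning_lemma {Ω : Type*} [MeasurableSpace Ω] (μ : Measure Ω)
    [IsProbabilityMeasure μ] (n : ℕ) (hn : 1 ≤ n)
    (X : Fin n → Ω → ℝ) (α β : Fin n → ℝ)
    (hα : ∀ j, 0 < α j)
    (hrange : ∀ j ω, X j ω ∈ Set.Icc (α j) (β j))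
    (hmeas : ∀ j, Measurable (X j))
    (hint : ∀ j, Integrable (X j) μ)
    (hindep : iIndepFun X μ)
    (c : ℝ) (hc : IsGreatest (Set.range fun j => β j / α j) c)
    (ε δ : ℝ) (hε0 : 0 < ε) (hε1 : ε < 1)
    (hδ0 : 0 < δ) (hδ1 : δ < 1 / (2 * Real.exp 2)) :
    ∃ R S T : Finset (Fin n),
      Disjoint R S ∧ Disjoint R T ∧ Disjoint S T ∧ R ∪ S ∪ T = Finset.univ ∧
      (R.card : ℝ) ≤ 16 * c ^ 2 / ε ^ 3 * Real.log (2 / δ) ∧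
      ENNReal.ofReal (1 - δ) ≤
        μ {ω | (1 - ε) * (∫ ω', (∑ j ∈ S, X j ω') ∂μ) ≤ ∑ j ∈ S, X j ω ∧
               (∑ j ∈ S, X j ω) ≤ (1 + ε) * (∫ ω', (∑ j ∈ S, X j ω') ∂μ)} ∧
      (∑ j ∈ T, ∫ ω, X j ω ∂μ) ≤ ε * ∑ j : Fin n, ∫ ω, X j ω ∂μ := by
  classical
  have hΩ : Nonempty Ω := by
    by_contra h
    rw [not_nonempty_iff] at h
    have h1 : μ Set.univ = 1 := measure_univ
    rw [Set.univ_eq_empty_iff.mpr h, measure_empty] at h1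
    exact zero_ne_one h1
  -- abbreviate expectations
  set Ex : Fin n → ℝ := fun j => ∫ ω, X j ω ∂μ with hEx
  have hExj : ∀ j, Ex j = ∫ ω, X j ω ∂μ := fun _ => rfl
  have hαβ : ∀ j, α j ≤ β j := fun j => le_trans (hrange j hΩ.some).1 (hrange j hΩ.some).2
  have hEx_lb : ∀ j, α j ≤ Ex j := by
    intro j
    have := integral_mono (μ := μ) (integrable_const (α j)) (hint j) (fun ω => (hrange j ω).1)
    simpa [hExj] using this
  have hEx_ub : ∀ j, Ex j ≤ β j := by
    intro j
    have := integral_mono (μ := μ) (hint j) (integrable_const (β j)) (fun ω => (hrange j ω).2)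
    simpa [hExj] using this
  clear_value Ex
  have hEx_pos : ∀ j, 0 < Ex j := fun j => lt_of_lt_of_le (hα j) (hEx_lb j)
  have hc1 : 1 ≤ c := by
    obtain ⟨j₀, hj₀⟩ := hc.1
    rw [← hj₀]
    exact (one_le_div (hα j₀)).mpr (hαβ j₀)
  have hcpos : (0:ℝ) < c := by linarith
  have hcb : ∀ j, β j ≤ c * α j := fun j => (div_le_iff₀ (hα j)).mp (hc.2 ⟨j, rfl⟩)
  set L := Real.log (2 / δ) with hL
  have hδpos2 : (0:ℝ) < 2 / δ := by positivity
  have hL1 : 1 ≤ L := by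
    rw [hL, Real.le_log_iff_exp_le hδpos2]
    have h2δ : 4 * Real.exp 2 < 2 / δ := by
      rw [lt_div_iff₀ hδ0]
      rw [lt_div_iff₀ (by positivity : (0:ℝ) < 2 * Real.exp 2)] at hδ1
      nlinarith [Real.exp_pos 2]
    have : Real.exp 1 ≤ Real.exp 2 := Real.exp_le_exp.mpr one_le_two
    nlinarith [Real.exp_pos 2]
  have hexpL : Real.exp (-L) = δ / 2 := by
    rw [hL, Real.exp_neg, Real.exp_log hδpos2, inv_div]
  clear_value L
  set B := 16 * c ^ 2 / ε ^ 3 * L with hB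
  clear_value B
  have hε3 : (0:ℝ) < ε ^ 3 := by positivity
  have hq : 1 ≤ c ^ 2 / ε ^ 3 := by
    rw [le_div_iff₀ hε3]
    have h1 : ε ^ 3 ≤ 1 := pow_le_one₀ hε0.le hε1.le
    have h2 : 1 ≤ c ^ 2 := one_le_pow₀ hc1
    linarith
  have hB16 : 16 ≤ B := by
    have h := mul_le_mul hq hL1 zero_le_one (le_trans zero_le_one hq)
    calc (16:ℝ) = 16 * (1 * 1) := by ring
      _ ≤ 16 * (c ^ 2 / ε ^ 3 * L) := by nlinarith
      _ = B := by rw [hB]; ring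
  have hBpos : 0 < B := by linarith
  set t : ℕ := ⌊B⌋₊ with ht
  have htB : (t : ℝ) ≤ B := by rw [ht]; exact Nat.floor_le hBpos.le
  have hfloor : B - 1 < (t:ℝ) := by rw [ht]; exact Nat.sub_one_lt_floor B
  have ht1 : 1 ≤ t := by
    rw [ht]
    exact Nat.le_floor (by exact_mod_cast (by linarith : (1:ℝ) ≤ B))
  clear_value t
  have hMpos : 0 < ∑ j : Fin n, Ex j :=
    Finset.sum_pos (fun j _ => hEx_pos j) (Finset.univ_nonempty_iff.mpr ⟨⟨0, hn⟩⟩)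
  by_cases hcase : n ≤ t
  · -- R = univ
    refine ⟨Finset.univ, ∅, ∅, by simp, by simp, by simp, by simp, ?_, ?_, ?_⟩
    · rw [Finset.card_univ, Fintype.card_fin]
      calc (n:ℝ) ≤ (t:ℝ) := Nat.cast_le.mpr hcase
        _ ≤ B := htB
    · exact conc_empty μ X ε δ hδ0.le
    · simpa using (mul_nonneg hε0.le hMpos.le)
  · push_neg at hcase
    obtain ⟨R, hRcard, hRtop⟩ := exists_top_subset Ex t hcase.le
    have hRne : R.Nonempty := by
      rw [← Finset.card_pos, hRcard]; omega
    set pstar := R.inf' hRne Ex with hpstar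
    have hpstar_pos : 0 < pstar := by
      obtain ⟨i, hi, hieq⟩ := Finset.exists_mem_eq_inf' hRne Ex
      rw [hpstar, hieq]
      exact hEx_pos i
    have hcompl_le : ∀ j ∈ Rᶜ, Ex j ≤ pstar := by
      intro j hj
      rw [hpstar]
      exact Finset.le_inf' hRne _ (fun i hi => hRtop i hi j (Finset.mem_compl.mp hj))
    have hsumR : (t:ℝ) * pstar ≤ ∑ i ∈ R, Ex i := by
      have h1 := Finset.card_nsmul_le_sum R Ex pstar
        (fun i hi => by rw [hpstar]; exact Finset.inf'_le _ hi)
      rwa [hRcard, nsmul_eq_mul] at h1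
    clear_value pstar
    have hsplit : ∑ i ∈ R, Ex i + ∑ i ∈ Rᶜ, Ex i = ∑ j : Fin n, Ex j :=
      Finset.sum_add_sum_compl R Ex
    have hsumS_nonneg : 0 ≤ ∑ i ∈ Rᶜ, Ex i := Finset.sum_nonneg fun i _ => (hEx_pos i).le
    by_cases hsmall : ∑ j ∈ Rᶜ, Ex j ≤ ε * ∑ j : Fin n, Ex j
    · -- T = Rᶜ, S = ∅
      refine ⟨R, ∅, Rᶜ, by simp, disjoint_compl_right, by simp, by simp, ?_, ?_, hsmall⟩
      · rw [hRcard]; exact htB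
      · exact conc_empty μ X ε δ hδ0.le
    · -- S = Rᶜ, T = ∅
      push_neg at hsmall
      refine ⟨R, Rᶜ, ∅, disjoint_compl_right, by simp, by simp, by simp, ?_, ?_, ?_⟩
      · rw [hRcard]; exact htB
      pick_goal 2
      · simpa using (mul_nonneg hε0.le hMpos.le)
      -- the concentration statement
      set S := Rᶜ with hSdef
      have hMS_int : ∫ ω', (∑ j ∈ S, X j ω') ∂μ = ∑ j ∈ S, Ex j := by
        rw [integral_finset_sum S (fun j _ => hint j)]
        exact Finset.sum_congr rfl (fun j _ => (hExj j).symm)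
      rw [hMS_int]
      set MS := ∑ j ∈ S, Ex j with hMS
      have hMSpos : 0 < MS := lt_trans (by positivity) hsmall
      have hMS_lb : ε * ((t:ℝ) * pstar) ≤ MS := by
        rw [hMS]
        have h1 : ∑ i ∈ R, Ex i ≤ ∑ j : Fin n, Ex j := by linarith
        nlinarith
      clear_value MS
      set s := ε / (4 * c ^ 2 * pstar) with hs
      have hs_pos : 0 < s := by rw [hs]; positivity
      clear_value s
      have hs_eq : s * (4 * c ^ 2 * pstar) = ε := by
        rw [hs]; field_simp
      -- per-variable facts
      have hdiff : ∀ j ∈ S, β j - α j ≤ c * pstar := by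
        intro j hj
        have h1 : β j ≤ c * α j := hcb j
        have h2 : α j ≤ Ex j := hEx_lb j
        have h3 : Ex j ≤ pstar := hcompl_le j hj
        nlinarith [hα j]
      have hdiff2 : ∀ j ∈ S, (β j - α j)^2 ≤ c^2 * pstar * Ex j := by
        intro j hj
        have h1 : β j - α j ≤ c * pstar := hdiff j hj
        have h2 : β j - α j ≤ c * Ex j := by
          have := hcb j; have := hEx_lb j; nlinarith [hα j]
        have h3 : 0 ≤ β j - α j := by linarith [hαβ j]
        calc (β j - α j)^2 = (β j - α j) * (β j - α j) := by ring
          _ ≤ (c * pstar) * (c * Ex j) :=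
              mul_le_mul h1 h2 h3 (by positivity)
          _ = c^2 * pstar * Ex j := by ring
      have hexp_int : ∀ (r : ℝ), Integrable (fun ω => Real.exp (r * (∑ j ∈ S, X j) ω)) μ := by
        intro r
        refine hindep.integrable_exp_mul_sum hmeas (fun j _ => ?_)
        refine Integrable.mono' (integrable_const (Real.exp (|r| * max |α j| |β j|)))
          (((hmeas j).const_mul r).exp.aestronglyMeasurable) ?_
        filter_upwards with ω
        rw [Real.norm_eq_abs, Real.abs_exp, Real.exp_le_exp]
        calc r * X j ω ≤ |r * X j ω| := le_abs_self _
          _ = |r| * |X j ω| := abs_mul _ _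
          _ ≤ |r| * max |α j| |β j| := by
              refine mul_le_mul_of_nonneg_left ?_ (abs_nonneg r)
              exact abs_le_max_abs_abs (hrange j ω).1 (hrange j ω).2
      -- mgf bound for r with |r| = s
      have hprod : ∀ r : ℝ, |r| = s → mgf (∑ j ∈ S, X j) μ r ≤
          Real.exp (r * MS + s * ε / 2 * MS) := by
        intro r hr
        rw [hindep.mgf_sum hmeas S]
        have hkey : ∀ j ∈ S, mgf (X j) μ r ≤ Real.exp (r * Ex j + s * ε / 2 * Ex j) := by
          intro j hj
          have hb : |r| * (β j - α j) ≤ 1/2 := by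
            rw [hr]
            have h2 : s * (β j - α j) ≤ s * (c * pstar) :=
              mul_le_mul_of_nonneg_left (hdiff j hj) hs_pos.le
            have h3 : s * (c * pstar) * (4 * c) = ε := by
              rw [← hs_eq]; ring
            have h5 : ε / (4*c) ≤ 1/4 := by
              rw [div_le_iff₀ (by positivity)]; nlinarith
            have h6 : s * (c * pstar) = ε / (4*c) := by
              rw [eq_div_iff (by positivity : (0:ℝ) < 4*c).ne']; rw [← h3]
            linarith
          have hmle := mgf_le_of_Icc (μ := μ) (hmeas j) (hrange j) hb
          rw [← hExj j] at hmle
          refine le_trans hmle ?_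
          rw [Real.exp_le_exp]
          have hr2 : r^2 = s^2 := by rw [← sq_abs, hr]
          have h4 : 2 * r^2 * (β j - α j)^2 ≤ 2 * s^2 * (c^2 * pstar * Ex j) := by
            rw [hr2]
            exact mul_le_mul_of_nonneg_left (hdiff2 j hj) (by positivity)
          have h5 : 2 * s^2 * (c^2 * pstar * Ex j) = s * ε / 2 * Ex j := by
            rw [← hs_eq]; ring
          linarith
        calc ∏ j ∈ S, mgf (X j) μ r
            ≤ ∏ j ∈ S, Real.exp (r * Ex j + s * ε / 2 * Ex j) :=
              Finset.prod_le_prod (fun j _ => mgf_nonneg) hkey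
          _ = Real.exp (∑ j ∈ S, (r * Ex j + s * ε / 2 * Ex j)) := (Real.exp_sum _ _).symm
          _ = Real.exp (r * MS + s * ε / 2 * MS) := by
              rw [hMS, Finset.sum_add_distrib, ← Finset.mul_sum, ← Finset.mul_sum]
      -- exponent bound
      have ht2 : 8 * c^2 / ε^3 * L ≤ (t:ℝ) := by
        have he : 8 * c^2 / ε^3 * L = B / 2 := by rw [hB]; ring
        linarith
      have h2 : 8 * c^2 * L ≤ ε^3 * t := by
        have h := mul_le_mul_of_nonneg_right ht2 hε3.le
        have he : 8 * c^2 / ε^3 * L * ε^3 = 8 * c^2 * L := by field_simp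
        rw [he] at h
        linarith
      have hLexp : L ≤ s * ε * MS / 2 := by
        have key : 8 * c^2 * L * pstar ≤ ε^2 * MS := by
          have a1 := mul_le_mul_of_nonneg_right h2 hpstar_pos.le
          have a2 := mul_le_mul_of_nonneg_left hMS_lb (sq_nonneg ε)
          nlinarith
        have hrw : s * ε * MS / 2 * (4 * c^2 * pstar) = ε^2 * MS / 2 := by
          rw [← hs_eq]; ring
        rw [← mul_le_mul_iff_left₀ (by positivity : (0:ℝ) < 4 * c^2 * pstar), hrw]
        linarith [key]
      -- the two tails
      have htail_up : Real.exp (-s * ((1 + ε) * MS)) *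
          Real.exp (s * MS + s * ε / 2 * MS) ≤ δ / 2 := by
        rw [← Real.exp_add, ← hexpL, Real.exp_le_exp]
        nlinarith [hLexp]
      have htail_lo : Real.exp (-(-s) * ((1 - ε) * MS)) *
          Real.exp (-s * MS + s * ε / 2 * MS) ≤ δ / 2 := by
        rw [← Real.exp_add, ← hexpL, Real.exp_le_exp]
        nlinarith [hLexp]
      have hup : (μ {ω | (1 + ε) * MS ≤ ∑ j ∈ S, X j ω}).toReal ≤ δ / 2 := by
        have h1 := measure_ge_le_exp_mul_mgf (μ := μ) (X := ∑ j ∈ S, X j) (t := s)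
          ((1 + ε) * MS) hs_pos.le (hexp_int s)
        simp only [Finset.sum_apply] at h1
        refine le_trans h1 (le_trans ?_ htail_up)
        exact mul_le_mul_of_nonneg_left (hprod s (abs_of_pos hs_pos)) (Real.exp_pos _).le
      have hlo : (μ {ω | ∑ j ∈ S, X j ω ≤ (1 - ε) * MS}).toReal ≤ δ / 2 := by
        have h1 := measure_le_le_exp_mul_mgf (μ := μ) (X := ∑ j ∈ S, X j) (t := -s)
          ((1 - ε) * MS) (by linarith) (hexp_int (-s))
        simp only [Finset.sum_apply] at h1
        refine le_trans h1 (le_trans ?_ htail_lo)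
        exact mul_le_mul_of_nonneg_left (hprod (-s) (by rw [abs_neg, abs_of_pos hs_pos]))
          (Real.exp_pos _).le
      -- assemble
      have hZmeas : Measurable fun ω => ∑ j ∈ S, X j ω :=
        Finset.measurable_sum S (fun j _ => hmeas j)
      set good : Set Ω := {ω | (1 - ε) * MS ≤ ∑ j ∈ S, X j ω ∧
          (∑ j ∈ S, X j ω) ≤ (1 + ε) * MS} with hgood
      have hgood_meas : MeasurableSet good := by
        rw [hgood, Set.setOf_and]
        exact (measurableSet_le measurable_const hZmeas).inter
          (measurableSet_le hZmeas measurable_const)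
      have hsub : goodᶜ ⊆ {ω | ∑ j ∈ S, X j ω ≤ (1 - ε) * MS} ∪
          {ω | (1 + ε) * MS ≤ ∑ j ∈ S, X j ω} := by
        intro ω hω
        rw [Set.mem_compl_iff, hgood, Set.mem_setOf_eq, not_and_or] at hω
        rcases hω with h | h
        · exact Or.inl (le_of_lt (lt_of_not_ge h))
        · exact Or.inr (le_of_lt (lt_of_not_ge h))
      have hbad : μ goodᶜ ≤ ENNReal.ofReal δ := by
        calc μ goodᶜ ≤ μ ({ω | ∑ j ∈ S, X j ω ≤ (1 - ε) * MS} ∪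
            {ω | (1 + ε) * MS ≤ ∑ j ∈ S, X j ω}) := measure_mono hsub
          _ ≤ μ {ω | ∑ j ∈ S, X j ω ≤ (1 - ε) * MS} +
              μ {ω | (1 + ε) * MS ≤ ∑ j ∈ S, X j ω} := measure_union_le _ _
          _ ≤ ENNReal.ofReal (δ/2) + ENNReal.ofReal (δ/2) := by
              gcongr
              · exact (ENNReal.le_ofReal_iff_toReal_le (measure_ne_top μ _)
                  (by linarith)).mpr hlo
              · exact (ENNReal.le_ofReal_iff_toReal_le (measure_ne_top μ _)
                  (by linarith)).mpr hup
          _ = ENNReal.ofReal δ := by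
              rw [← ENNReal.ofReal_add (by linarith) (by linarith)]
              norm_num
      have hcompl : μ good + μ goodᶜ = 1 := by
        rw [measure_add_measure_compl hgood_meas, measure_univ]
      calc ENNReal.ofReal (1 - δ) = 1 - ENNReal.ofReal δ := by
            rw [← ENNReal.ofReal_one, ← ENNReal.ofReal_sub _ hδ0.le]
        _ ≤ μ good := by
            rw [tsub_le_iff_right]
            calc (1:ENNReal) = μ good + μ goodᶜ := hcompl.symm
              _ ≤ μ good + ENNReal.ofReal δ := add_le_add_right hbad _
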